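/- (Single Marble Optimality.) In the single-marble model with parameters φ_i, the block policy determined by an ordering v^1,…,v^m of the urns is optimal (its expected cost E[C] is less than or equal to the expected cost of every valid policy) if and only if φ_{v^k}/N_{v^k} ≥ φ_{v^{k+1}}/N_{v^{k+1}} for all k = 1,…,m−1. -/

import Mathlib

open Finset

variable {V : Type*} [Fintype V] [DecidableEq V]

/-- `phi μ U` is the probability that every urn in `U` contains a red marble:
the sum of `μ T` over all `T ⊇ U`. -/
noncomputable def phi (μ : Finset V → ℝ) (U : Finset V) : ℝ :=
  ∑ T ∈ univ.filter (fun T => U ⊆ T), μ T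

/-- `Qfun N μ x` is the probability that no red marble appears among the first
`x i` randomly drawn marbles of each urn `i`. -/
noncomputable def Qfun (N : V → ℕ) (μ : Finset V → ℝ) (x : V → ℕ) : ℝ :=
  ∑ T : Finset V, μ T * ∏ i ∈ T, (1 - (x i : ℝ) / (N i : ℝ))

/-- `Rfun N μ U x` is the probability that no red marble has been drawn and every
urn in `U` contains a red marble. -/
noncomputable def Rfun (N : V → ℕ) (μ : Finset V → ℝ) (U : Finset V) (x : V → ℕ) : ℝ :=
  ∑ T ∈ univ.filter (fun T => U ⊆ T), μ T * ∏ i ∈ T, (1 - (x i : ℝ) / (N i : ℝ))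

/-- A valid policy: a finite sequence of urn queries in which urn `i` occurs
exactly `N i` times. -/
def validPolicy (N : V → ℕ) (L : List V) : Prop := ∀ i, L.count i = N i

/-- Expected cost (expected number of blue marbles drawn) of a policy `L`. -/
noncomputable def ECost (N : V → ℕ) (μ : Finset V → ℝ) (L : List V) : ℝ :=
  ∑ t ∈ Finset.range L.length, Qfun N μ (fun i => (L.take (t + 1)).count i)

/-- The block policy determined by an ordering `v` of the urns: query urn `v 0`
for `N (v 0)` stages, then `v 1` for `N (v 1)` stages, and so on. -/
def blockPolicy (N : V → ℕ) (v : Fin (Fintype.card V) → V) : List V :=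
  (List.ofFn v).flatMap (fun i => List.replicate (N i) i)

/-- The single-marble model with parameters `φ i`. -/
noncomputable def muSingle (φ : V → ℝ) : Finset V → ℝ :=
  fun T => if T.card = 1 then ∑ i ∈ T, φ i
    else if T = ∅ then 1 - ∑ i : V, φ i else 0

/-! ### Auxiliary lemmas on prefix sums of sorted lists -/

lemma takeSum_cons : ∀ (k : ℕ) (a : ℝ) (l : List ℝ), List.Pairwise (· ≥ ·) (a :: l) →
    (∀ b ∈ a :: l, 0 ≤ b) → (l.take k).sum ≤ ((a :: l).take k).sum := by
  intro k
  induction k with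
  | zero => intro a l _ _; simp
  | succ k ih =>
    intro a l hs hn
    rw [List.take_succ_cons]
    match l with
    | [] => simpa using hn a (by simp)
    | b :: l' =>
      rw [List.take_succ_cons, List.sum_cons, List.sum_cons]
      have h1 : (l'.take k).sum ≤ ((b :: l').take k).sum := by
        apply ih
        · exact hs.of_cons
        · intro c hc; exact hn c (List.mem_cons_of_mem a hc)
      have h2 : b ≤ a := (List.pairwise_cons.mp hs).1 b (by simp)
      linarith

lemma sublist_sum_le : ∀ {s l : List ℝ}, s.Sublist l → List.Pairwise (· ≥ ·) l →
    (∀ b ∈ l, 0 ≤ b) → s.sum ≤ (l.take s.length).sum := by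
  intro s l h
  induction h with
  | slnil => simp
  | cons a h ih =>
    intro hs hn
    have := ih hs.of_cons (fun b hb => hn b (List.mem_cons_of_mem _ hb))
    calc _ ≤ _ := this
    _ ≤ _ := takeSum_cons _ _ _ hs hn
  | cons_cons a h ih =>
    intro hs hn
    rw [List.length_cons, List.take_succ_cons, List.sum_cons, List.sum_cons]
    have := ih hs.of_cons (fun b hb => hn b (List.mem_cons_of_mem _ hb))
    linarith

lemma takeSum_mono {l : List ℝ} (hn : ∀ b ∈ l, 0 ≤ b) {j t : ℕ} (h : j ≤ t) :
    (l.take j).sum ≤ (l.take t).sum := by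
  have h1 : l.take j = (l.take t).take j := by rw [List.take_take, min_eq_left h]
  rw [h1]
  conv_rhs => rw [← List.take_append_drop j (l.take t)]
  rw [List.sum_append]
  have : 0 ≤ ((l.take t).drop j).sum := by
    apply List.sum_nonneg
    intro b hb
    exact hn b (List.mem_of_mem_take (List.mem_of_mem_drop hb))
  linarith

lemma perm_takeSum_le {l l' : List ℝ} (hp : l'.Perm l) (hs : List.Pairwise (· ≥ ·) l)
    (hn : ∀ b ∈ l, 0 ≤ b) (t : ℕ) : (l'.take t).sum ≤ (l.take t).sum := by
  have hsub : (l'.take t).Subperm l := ((l'.take_sublist t).subperm).trans hp.subperm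
  obtain ⟨s, hsp, hsl⟩ := hsub
  have h1 : s.sum ≤ (l.take s.length).sum := sublist_sum_le hsl hs hn
  have h2 : s.length ≤ t := by
    rw [hsp.length_eq, List.length_take]; exact min_le_left _ _
  have := takeSum_mono hn h2
  rw [hsp.sum_eq] at h1
  linarith

/-! ### Single-marble cost identities -/

lemma Qfun_single (N : V → ℕ) (φ : V → ℝ) (x : V → ℕ) :
    Qfun N (muSingle φ) x = 1 - ∑ i : V, φ i / (N i : ℝ) * (x i : ℝ) := by
  classical
  set f : Finset V → ℝ := fun T => muSingle φ T * ∏ i ∈ T, (1 - (x i : ℝ) / (N i : ℝ)) with hf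
  set S : Finset (Finset V) := insert ∅ (univ.image fun i => ({i} : Finset V)) with hS
  have h0 : Qfun N (muSingle φ) x = ∑ T ∈ S, f T := by
    rw [Qfun]
    refine (Finset.sum_subset (subset_univ S) ?_).symm
    intro T _ hT
    simp only [hS, mem_insert, mem_image, mem_univ, true_and] at hT
    push_neg at hT
    have hcard : T.card ≠ 1 := by
      intro hc
      obtain ⟨a, ha⟩ := Finset.card_eq_one.mp hc
      exact hT.2 a ha.symm
    have : muSingle φ T = 0 := by
      simp [muSingle, hcard, hT.1.ne_empty]
    simp [hf, this]
  have hne : (∅ : Finset V) ∉ univ.image fun i => ({i} : Finset V) := by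
    simp
  rw [h0, hS, Finset.sum_insert hne,
    Finset.sum_image (fun a _ b _ h => Finset.singleton_injective h)]
  have hfe : f ∅ = 1 - ∑ i : V, φ i := by simp [hf, muSingle]
  have hfs : ∀ i : V, f {i} = φ i * (1 - (x i : ℝ) / (N i : ℝ)) := by
    intro i; simp [hf, muSingle]
  rw [hfe]
  rw [Finset.sum_congr rfl (fun i _ => hfs i)]
  have : ∑ i : V, φ i * (1 - (x i : ℝ) / (N i : ℝ))
      = (∑ i : V, φ i) - ∑ i : V, φ i / (N i : ℝ) * (x i : ℝ) := by
    rw [← Finset.sum_sub_distrib]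
    exact Finset.sum_congr rfl (fun i _ => by ring)
  rw [this]; ring

lemma sum_count_mul (l : List V) (f : V → ℝ) :
    ∑ i : V, (l.count i : ℝ) * f i = (l.map f).sum := by
  induction l with
  | nil => simp
  | cons a l ih =>
    simp only [List.count_cons, List.map_cons, List.sum_cons]
    push_cast
    rw [← ih]
    have : ∀ i : V, ((l.count i : ℝ) + if (a == i) = true then 1 else 0) * f i
        = (l.count i : ℝ) * f i + (if a = i then f i else 0) := by
      intro i; by_cases h : a = i <;> simp [h] <;> ring
    rw [Finset.sum_congr rfl (fun i _ => this i), Finset.sum_add_distrib,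
      Finset.sum_ite_eq univ a f]
    simp [add_comm]

/-- `GS l` is `∑_{t < |l|} (sum of first `t+1` entries of `l`)`. -/
noncomputable def GS (l : List ℝ) : ℝ := ∑ t ∈ Finset.range l.length, (l.take (t + 1)).sum

lemma GS_cons (a : ℝ) (l : List ℝ) : GS (a :: l) = (l.length + 1) * a + GS l := by
  simp only [GS, List.length_cons, List.take_succ_cons, List.sum_cons]
  rw [Finset.sum_add_distrib, Finset.sum_const, Finset.card_range]
  rw [Finset.sum_range_succ' (fun t => (l.take t).sum)]
  simp [nsmul_eq_mul, mul_comm, add_comm]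

lemma GS_append_sub (l₁ l₂ : List ℝ) (h : l₁.length = l₂.length) :
    ∀ p : List ℝ, GS (p ++ l₁) - GS (p ++ l₂) = GS l₁ - GS l₂ := by
  intro p
  induction p with
  | nil => simp
  | cons a p ih =>
    rw [List.cons_append, List.cons_append, GS_cons, GS_cons]
    have : (p ++ l₁).length = (p ++ l₂).length := by simp [h]
    rw [this]
    linarith

lemma GS_replicate_append (a : ℝ) (l : List ℝ) :
    ∀ n : ℕ, GS (List.replicate n a ++ l)
      = a * (∑ j ∈ Finset.range n, ((l.length : ℝ) + j + 1)) + GS l := by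
  intro n
  induction n with
  | zero => simp
  | succ n ih =>
    rw [List.replicate_succ, List.cons_append, GS_cons, ih, Finset.sum_range_succ]
    have : (List.replicate n a ++ l).length = n + l.length := by simp
    rw [this]
    push_cast
    ring

lemma GS_swap_blocks (a b : ℝ) (na nb : ℕ) (l : List ℝ) :
    GS (List.replicate na a ++ (List.replicate nb b ++ l))
      - GS (List.replicate nb b ++ (List.replicate na a ++ l))
      = (na : ℝ) * nb * (a - b) := by
  rw [GS_replicate_append, GS_replicate_append, GS_replicate_append, GS_replicate_append]
  have hba : (List.replicate nb b ++ l).length = nb + l.length := by simp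
  have hab : (List.replicate na a ++ l).length = na + l.length := by simp
  rw [hba, hab]
  have key : ∀ (n k : ℕ), (∑ j ∈ Finset.range n, (((k : ℝ) + l.length) + j + 1))
      - ∑ j ∈ Finset.range n, ((l.length : ℝ) + j + 1) = (n : ℝ) * k := by
    intro n k
    rw [← Finset.sum_sub_distrib]
    rw [Finset.sum_congr rfl (fun j _ => by ring :
      ∀ j ∈ Finset.range n, ((k : ℝ) + l.length) + j + 1 - ((l.length : ℝ) + j + 1) = (k : ℝ))]
    simp [mul_comm]
  have k1 := key na nb
  have k2 := key nb na
  push_cast at k1 k2 ⊢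
  linear_combination a * k1 - b * k2

lemma ECost_single_eq (N : V → ℕ) (φ : V → ℝ) (L : List V) :
    ECost N (muSingle φ) L = L.length - GS (L.map fun i => φ i / (N i : ℝ)) := by
  set w : V → ℝ := fun i => φ i / (N i : ℝ) with hw
  rw [ECost, GS, List.length_map]
  have hterm : ∀ t,
      Qfun N (muSingle φ) (fun i => (L.take (t + 1)).count i)
        = 1 - ((L.map w).take (t + 1)).sum := by
    intro t
    rw [Qfun_single, ← List.map_take, ← sum_count_mul (L.take (t + 1)) w]
    rw [Finset.sum_congr rfl (fun i _ => by rw [mul_comm])]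
  rw [Finset.sum_congr rfl (fun t _ => hterm t), Finset.sum_sub_distrib]
  simp

lemma count_blockPolicy (N : V → ℕ) (v : Fin (Fintype.card V) → V)
    (hv : Function.Bijective v) (i : V) : (blockPolicy N v).count i = N i := by
  rw [blockPolicy, List.count_flatMap]
  have h1 : List.map (List.count i ∘ fun j => List.replicate (N j) j) (List.ofFn v)
      = List.ofFn (fun k => if v k = i then N (v k) else 0) := by
    rw [List.map_ofFn]
    congr 1
    funext k
    simp [Function.comp, List.count_replicate]
  rw [h1, List.sum_ofFn]
  rw [Fintype.sum_bijective v hv _ (fun a => if a = i then N a else 0) (fun k => rfl)]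
  simp

/-! ### Main theorem -/

/-- **Single Marble Optimality** (Theorem 6 of the paper): in the single-marble
model, the block policy determined by an ordering `v` is optimal if and only if
the index `φ i / N i` is nonincreasing along `v`. -/
theorem single_marble_optimality (N : V → ℕ) (hN : ∀ i, 1 ≤ N i)
    (φ : V → ℝ) (hφ0 : ∀ i, 0 < φ i) (hφ1 : ∑ i : V, φ i ≤ 1)
    (v : Fin (Fintype.card V) → V) (hv : Function.Bijective v) :
    (∀ L : List V, validPolicy N L →
        ECost N (muSingle φ) (blockPolicy N v) ≤ ECost N (muSingle φ) L) ↔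
      ∀ k : ℕ, (hk : k + 1 < Fintype.card V) →
        φ (v ⟨k + 1, hk⟩) / (N (v ⟨k + 1, hk⟩) : ℝ) ≤
          φ (v ⟨k, Nat.lt_of_succ_lt hk⟩) / (N (v ⟨k, Nat.lt_of_succ_lt hk⟩) : ℝ) := by
  classical
  set w : V → ℝ := fun i => φ i / (N i : ℝ) with hw
  have hw0 : ∀ i, 0 ≤ w i := fun i => div_nonneg (hφ0 i).le (Nat.cast_nonneg _)
  set g : V → List V := fun j => List.replicate (N j) j with hg
  constructor
  · -- optimal → nonincreasing index
    intro hopt k hk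
    by_contra hcon
    push_neg at hcon
    set a := w (v ⟨k, Nat.lt_of_succ_lt hk⟩) with ha
    set b := w (v ⟨k + 1, hk⟩) with hb
    have hab : a < b := hcon
    set A := (List.ofFn v).take k with hA
    set B := (List.ofFn v).drop (k + 2) with hB
    have hklen : k < (List.ofFn v).length := by
      rw [List.length_ofFn]; omega
    have hklen1 : k + 1 < (List.ofFn v).length := by
      rw [List.length_ofFn]; omega
    have hdrop : (List.ofFn v).drop k
        = v ⟨k, Nat.lt_of_succ_lt hk⟩ :: v ⟨k + 1, hk⟩ :: B := by
      rw [List.drop_eq_getElem_cons hklen, List.drop_eq_getElem_cons hklen1]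
      simp [List.getElem_ofFn, hB]
    have hsplit : List.ofFn v = A ++ (v ⟨k, Nat.lt_of_succ_lt hk⟩ :: v ⟨k + 1, hk⟩ :: B) := by
      rw [hA, ← hdrop, List.take_append_drop]
    have hblock : blockPolicy N v
        = A.flatMap g ++ (g (v ⟨k, Nat.lt_of_succ_lt hk⟩)
            ++ (g (v ⟨k + 1, hk⟩) ++ B.flatMap g)) := by
      rw [blockPolicy]
      conv_lhs => rw [hsplit]
      rw [List.flatMap_append, List.flatMap_cons, List.flatMap_cons]
    set L' : List V := A.flatMap g ++ (g (v ⟨k + 1, hk⟩)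
        ++ (g (v ⟨k, Nat.lt_of_succ_lt hk⟩) ++ B.flatMap g)) with hL'
    have hvalid' : validPolicy N L' := by
      intro i
      have h1 := count_blockPolicy N v hv i
      rw [hblock] at h1
      rw [hL']
      simp only [List.count_append] at h1 ⊢
      omega
    have hcost := hopt L' hvalid'
    have hlen : (blockPolicy N v).length = L'.length := by
      rw [hblock, hL']
      simp only [List.length_append]
      omega
    rw [ECost_single_eq, ECost_single_eq, hlen] at hcost
    have hGS : GS (L'.map w) ≤ GS ((blockPolicy N v).map w) := by linarith
    -- compute the difference of the two GS values
    have hmapb : (blockPolicy N v).map w = (A.flatMap g).map w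
        ++ (List.replicate (N (v ⟨k, Nat.lt_of_succ_lt hk⟩)) a
          ++ (List.replicate (N (v ⟨k + 1, hk⟩)) b ++ (B.flatMap g).map w)) := by
      rw [hblock]
      simp [hg, List.map_replicate, ha, hb]
    have hmapl : L'.map w = (A.flatMap g).map w
        ++ (List.replicate (N (v ⟨k + 1, hk⟩)) b
          ++ (List.replicate (N (v ⟨k, Nat.lt_of_succ_lt hk⟩)) a ++ (B.flatMap g).map w)) := by
      rw [hL']
      simp [hg, List.map_replicate, ha, hb]
    have hdiff : GS ((blockPolicy N v).map w) - GS (L'.map w)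
        = (N (v ⟨k, Nat.lt_of_succ_lt hk⟩) : ℝ) * (N (v ⟨k + 1, hk⟩)) * (a - b) := by
      rw [hmapb, hmapl]
      rw [GS_append_sub _ _ (by simp [List.length_append]; omega)]
      exact GS_swap_blocks a b _ _ _
    have hna : (0 : ℝ) < (N (v ⟨k, Nat.lt_of_succ_lt hk⟩) : ℝ) := by
      exact_mod_cast Nat.lt_of_lt_of_le Nat.zero_lt_one (hN _)
    have hnb : (0 : ℝ) < (N (v ⟨k + 1, hk⟩) : ℝ) := by
      exact_mod_cast Nat.lt_of_lt_of_le Nat.zero_lt_one (hN _)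
    nlinarith [hdiff, hGS, mul_pos hna hnb]
  · -- nonincreasing index → optimal
    intro hmono L hL
    have hchain : ∀ (j i : Fin (Fintype.card V)), i ≤ j → w (v j) ≤ w (v i) := by
      have H : ∀ (n : ℕ) (hn : n < Fintype.card V) (i : Fin (Fintype.card V)),
          i.val ≤ n → w (v ⟨n, hn⟩) ≤ w (v i) := by
        intro n
        induction n with
        | zero =>
          intro hn i hi
          have : i = ⟨0, hn⟩ := Fin.ext (Nat.le_zero.mp hi)
          rw [this]
        | succ n ih =>
          intro hn i hi
          rcases eq_or_lt_of_le hi with h | h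
          · have : i = ⟨n + 1, hn⟩ := Fin.ext h
            rw [this]
          · have h1 : w (v ⟨n + 1, hn⟩) ≤ w (v ⟨n, Nat.lt_of_succ_lt hn⟩) := hmono n hn
            have h2 := ih (Nat.lt_of_succ_lt hn) i (Nat.lt_succ_iff.mp h)
            linarith
      intro j i hij
      have := H j.val j.isLt i hij
      simpa using this
    have hsorted : List.Pairwise (· ≥ ·) ((blockPolicy N v).map w) := by
      have hmap : (blockPolicy N v).map w
          = ((List.ofFn v).map fun j => List.replicate (N j) (w j)).flatten := by
        rw [blockPolicy, List.map_flatMap, List.flatMap_def]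
        congr 1
        congr 1
        funext j
        simp [List.map_replicate]
      rw [hmap, List.pairwise_flatten]
      constructor
      · intro l' hl'
        simp only [List.mem_map] at hl'
        obtain ⟨j, _, hj⟩ := hl'
        rw [← hj]
        exact List.pairwise_replicate.mpr (Or.inr (le_refl _))
      · rw [List.map_ofFn, List.pairwise_ofFn]
        intro i j hij x hx y hy
        rw [List.eq_of_mem_replicate hx, List.eq_of_mem_replicate hy]
        exact hchain j i hij.le
    have hperm : L.Perm (blockPolicy N v) := by
      rw [List.perm_iff_count]
      intro i
      rw [hL i, count_blockPolicy N v hv]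
    have hnonneg : ∀ x ∈ (blockPolicy N v).map w, 0 ≤ x := by
      intro x hx
      obtain ⟨i, _, hi⟩ := List.mem_map.mp hx
      rw [← hi]; exact hw0 i
    have hGS : GS (L.map w) ≤ GS ((blockPolicy N v).map w) := by
      rw [GS, GS, List.length_map, List.length_map, hperm.length_eq]
      apply Finset.sum_le_sum
      intro t _
      exact perm_takeSum_le (hperm.map w) hsorted hnonneg (t + 1)
    rw [ECost_single_eq, ECost_single_eq, hperm.length_eq]
    linarith
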